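/- In an SMRD design with potential-outcome matrices y(γ), the following Hoeffding-type decomposition holds pointwise (as an identity of random variables): m̂_tr = mean(y(tr)) + ē_tr^B + ē_tr^S + ē̄_tr^BS; m̂_ib = mean(y(ib)) + ē_ib^B − ē_ib^S − ē̄_ib^BS; m̂_is = mean(y(is)) − ē_is^B + ē_is^S − ē̄_is^BS; m̂_cc = mean(y(cc)) − ē_cc^B − ē_cc^S + ē̄_cc^BS. Moreover E[ē_γ^B] = E[ē_γ^S] = E[ē̄_γ^BS] = 0 for every γ, and for all γ, γ′ ∈ {tr, ib, is, cc}: Cov(ē_γ^B, ē_{γ′}^S) = 0, Cov(ē_γ^B, ē̄_{γ′}^BS) = 0, and Cov(ē_γ^S, ē̄_{γ′}^BS) = 0. -/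

import Mathlib

open MeasureTheory ProbabilityTheory Finset Filter
open scoped ENNReal NNReal

noncomputable section

namespace SMRD

instance (n : ℕ) : MeasurableSpace (Finset (Fin n)) := ⊤

/-- Uniform probability measure on (the coercion to a set of) a finite set of outcomes. -/
def uniformOn {α : Type*} [MeasurableSpace α] (s : Finset α) : Measure α :=
  ((s.card : ℝ≥0∞))⁻¹ • Measure.count.restrict ↑s

/-- Sample space of an SMRD: a pair (set of treated rows, set of treated columns). -/
abbrev Omg (I J : ℕ) := Finset (Fin I) × Finset (Fin J)

/-- All admissible designs: row sets of size `IT` and column sets of size `JT`. -/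
def designSets (I J IT JT : ℕ) : Finset (Omg I J) :=
  (powersetCard IT (univ : Finset (Fin I))) ×ˢ (powersetCard JT (univ : Finset (Fin J)))

/-- The SMRD design measure: uniform over designs. -/
def smrd (I J IT JT : ℕ) : Measure (Omg I J) := uniformOn (designSets I J IT JT)

/-- Uniform measure over the row-treatment sets alone. -/
def rowMeasure (I IT : ℕ) : Measure (Finset (Fin I)) :=
  uniformOn (powersetCard IT (univ : Finset (Fin I)))

variable {I J : ℕ}

def rowMean (A : Fin I → Fin J → ℝ) (i : Fin I) : ℝ := (∑ j, A i j) / J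
def colMean (A : Fin I → Fin J → ℝ) (j : Fin J) : ℝ := (∑ i, A i j) / I
def grandMean (A : Fin I → Fin J → ℝ) : ℝ := (∑ i, ∑ j, A i j) / ((I : ℝ) * J)
/-- Double decentering. -/
def dcr (A : Fin I → Fin J → ℝ) (i : Fin I) (j : Fin J) : ℝ :=
  A i j - rowMean A i - colMean A j + grandMean A

def omegaB (A : Fin I → Fin J → ℝ) : ℝ :=
  (∑ i, (rowMean A i - grandMean A) ^ 2) / ((I : ℝ) - 1)
def omegaS (A : Fin I → Fin J → ℝ) : ℝ :=
  (∑ j, (colMean A j - grandMean A) ^ 2) / ((J : ℝ) - 1)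
def omegaBS (A : Fin I → Fin J → ℝ) : ℝ :=
  (∑ i, ∑ j, dcr A i j ^ 2) / (((I : ℝ) - 1) * ((J : ℝ) - 1))

def xiB (A A' : Fin I → Fin J → ℝ) : ℝ :=
  (∑ i, ((rowMean A i - grandMean A) - (rowMean A' i - grandMean A')) ^ 2) / ((I : ℝ) - 1)
def xiS (A A' : Fin I → Fin J → ℝ) : ℝ :=
  (∑ j, ((colMean A j - grandMean A) - (colMean A' j - grandMean A')) ^ 2) / ((J : ℝ) - 1)
def xiBS (A A' : Fin I → Fin J → ℝ) : ℝ :=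
  (∑ i, ∑ j, (dcr A i j - dcr A' i j) ^ 2) / (((I : ℝ) - 1) * ((J : ℝ) - 1))

/-- The four groups of an SMRD. -/
inductive Gp | tr | ib | is | cc
  deriving DecidableEq

instance instFintypeGp : Fintype Gp :=
  ⟨{Gp.tr, Gp.ib, Gp.is, Gp.cc}, fun x => by cases x <;> simp⟩

/-- Does the group use the treated rows? -/
def rowT : Gp → Bool | .tr => true | .ib => true | .is => false | .cc => false
/-- Does the group use the treated columns? -/
def colT : Gp → Bool | .tr => true | .is => true | .ib => false | .cc => false

def rowSet (ω : Omg I J) (γ : Gp) : Finset (Fin I) := if rowT γ then ω.1 else ω.1ᶜ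
def colSet (ω : Omg I J) (γ : Gp) : Finset (Fin J) := if colT γ then ω.2 else ω.2ᶜ

/-- Deterministic group row size (as a real number). -/
def IszR (I IT : ℕ) (γ : Gp) : ℝ := if rowT γ then (IT : ℝ) else (I : ℝ) - IT
/-- Deterministic group column size (as a real number). -/
def JszR (J JT : ℕ) (γ : Gp) : ℝ := if colT γ then (JT : ℝ) else (J : ℝ) - JT

/-- Sign η^B. -/
def etaB (γ γ' : Gp) : ℝ := if rowT γ = rowT γ' then 1 else -1
/-- Sign η^S. -/
def etaS (γ γ' : Gp) : ℝ := if colT γ = colT γ' then 1 else -1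

/-- Group-mean estimator m̂_γ. -/
def mhat (y : Gp → Fin I → Fin J → ℝ) (γ : Gp) (ω : Omg I J) : ℝ :=
  (∑ i ∈ rowSet ω γ, ∑ j ∈ colSet ω γ, y γ i j) /
    (((rowSet ω γ).card : ℝ) * ((colSet ω γ).card : ℝ))

/-- Covariance of two real random variables. -/
def cov {α : Type*} [MeasurableSpace α] (μ : Measure α) (f g : α → ℝ) : ℝ :=
  ∫ ω, (f ω - ∫ x, f x ∂μ) * (g ω - ∫ x, g x ∂μ) ∂μ

/-- 1-Wasserstein distance between Borel measures on ℝ (infimum over couplings). -/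
def wassersteinDist (μ ν : Measure ℝ) : ℝ≥0∞ :=
  ⨅ (π : Measure (ℝ × ℝ)) (_ : π.map Prod.fst = μ) (_ : π.map Prod.snd = ν),
    ∫⁻ p, ENNReal.ofReal |p.1 - p.2| ∂π

/-- Spectral (ℓ²→ℓ² operator) norm of an I×J matrix. -/
def opNorm (A : Fin I → Fin J → ℝ) : ℝ :=
  ‖LinearMap.toContinuousLinearMap (Matrix.toEuclideanLin (Matrix.of A))‖

/-- Indicator W_i^B. -/
def WB (ω : Omg I J) (i : Fin I) : ℝ := if i ∈ ω.1 then 1 else 0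
/-- Indicator W_j^S. -/
def WS (ω : Omg I J) (j : Fin J) : ℝ := if j ∈ ω.2 then 1 else 0

/-- Within-group row mean Â_{i,•}(γ) (with column index set `Cs`). -/
def rowHat (A : Fin I → Fin J → ℝ) (Cs : Finset (Fin J)) (i : Fin I) : ℝ :=
  (∑ j ∈ Cs, A i j) / (Cs.card : ℝ)
/-- Within-group column mean Â_{•,j}(γ). -/
def colHat (A : Fin I → Fin J → ℝ) (Rs : Finset (Fin I)) (j : Fin J) : ℝ :=
  (∑ i ∈ Rs, A i j) / (Rs.card : ℝ)
/-- Within-group grand mean m̂_γ(A). -/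
def gHat (A : Fin I → Fin J → ℝ) (Rs : Finset (Fin I)) (Cs : Finset (Fin J)) : ℝ :=
  (∑ i ∈ Rs, ∑ j ∈ Cs, A i j) / ((Rs.card : ℝ) * (Cs.card : ℝ))

/-- Empirical within-group covariance of row means. -/
def empRowCov (A B : Fin I → Fin J → ℝ) (γ : Gp) (ω : Omg I J) : ℝ :=
  (∑ i ∈ rowSet ω γ,
      (rowHat A (colSet ω γ) i - gHat A (rowSet ω γ) (colSet ω γ)) *
        (rowHat B (colSet ω γ) i - gHat B (rowSet ω γ) (colSet ω γ))) /
    ((rowSet ω γ).card : ℝ)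

/-- Empirical within-group covariance of column means. -/
def empColCov (A B : Fin I → Fin J → ℝ) (γ : Gp) (ω : Omg I J) : ℝ :=
  (∑ j ∈ colSet ω γ,
      (colHat A (rowSet ω γ) j - gHat A (rowSet ω γ) (colSet ω γ)) *
        (colHat B (rowSet ω γ) j - gHat B (rowSet ω γ) (colSet ω γ))) /
    ((colSet ω γ).card : ℝ)

/-- Empirical within-group covariance of doubly-decentered entries. -/
def empDcrCov (A B : Fin I → Fin J → ℝ) (γ : Gp) (ω : Omg I J) : ℝ :=
  (∑ i ∈ rowSet ω γ, ∑ j ∈ colSet ω γ,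
      (A i j - rowHat A (colSet ω γ) i - colHat A (rowSet ω γ) j +
          gHat A (rowSet ω γ) (colSet ω γ)) *
        (B i j - rowHat B (colSet ω γ) i - colHat B (rowSet ω γ) j +
          gHat B (rowSet ω γ) (colSet ω γ))) /
    (((rowSet ω γ).card : ℝ) * ((colSet ω γ).card : ℝ))

def popRowCov (A B : Fin I → Fin J → ℝ) : ℝ :=
  (∑ i, (rowMean A i - grandMean A) * (rowMean B i - grandMean B)) / (I : ℝ)
def popColCov (A B : Fin I → Fin J → ℝ) : ℝ :=
  (∑ j, (colMean A j - grandMean A) * (colMean B j - grandMean B)) / (J : ℝ)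
def popDcrCov (A B : Fin I → Fin J → ℝ) : ℝ :=
  (∑ i, ∑ j, dcr A i j * dcr B i j) / ((I : ℝ) * (J : ℝ))

/-- Buyer residual term ē_γ^B (deterministic normalizer I_γ ∈ {I_T, I_C}). -/
def ebarB (I J IT : ℕ) (y : Gp → Fin I → Fin J → ℝ) (γ : Gp) (ω : Omg I J) : ℝ :=
  (∑ i, (WB ω i - (IT : ℝ) / I) * (rowMean (y γ) i - grandMean (y γ))) / IszR I IT γ

/-- Seller residual term ē_γ^S (deterministic normalizer J_γ ∈ {J_T, J_C}). -/
def ebarS (I J JT : ℕ) (y : Gp → Fin I → Fin J → ℝ) (γ : Gp) (ω : Omg I J) : ℝ :=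
  (∑ j, (WS ω j - (JT : ℝ) / J) * (colMean (y γ) j - grandMean (y γ))) / JszR J JT γ

/-- Buyer–seller residual term ē̄_γ^BS. -/
def ebarBS (I J IT JT : ℕ) (y : Gp → Fin I → Fin J → ℝ) (γ : Gp) (ω : Omg I J) : ℝ :=
  (∑ i, ∑ j, (WB ω i - (IT : ℝ) / I) * (WS ω j - (JT : ℝ) / J) * dcr (y γ) i j) /
    (IszR I IT γ * JszR J JT γ)


-- ==================== auxiliary lemmas ====================

instance (n : ℕ) : MeasurableSingletonClass (Finset (Fin n)) := ⟨fun _ => trivial⟩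

lemma integral_uniformOn_eq {α : Type*} [MeasurableSpace α] [MeasurableSingletonClass α]
    [Fintype α] (s : Finset α) (f : α → ℝ) :
    ∫ ω, f ω ∂(uniformOn s) = (s.card : ℝ)⁻¹ * ∑ ω ∈ s, f ω := by
  have hfin : IsFiniteMeasure (Measure.count.restrict (↑s : Set α)) := by
    constructor
    rw [Measure.restrict_apply_univ, Measure.count_apply_finset]
    exact ENNReal.natCast_lt_top _
  have hint : IntegrableOn f (↑s : Set α) Measure.count := Integrable.of_finite
  rw [uniformOn, integral_smul_measure, MeasureTheory.integral_finset s hint]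
  simp [Measure.count_singleton, ENNReal.toReal_inv, smul_eq_mul]

lemma sum1D {n : ℕ} (hn : (n:ℝ) ≠ 0) (v f : Fin n → ℝ) :
    ∑ j, v j * f j =
      (∑ j, v j) * ((∑ j, f j) / n)
      + ∑ j, (v j - (∑ j', v j')/n) * (f j - (∑ j', f j')/n) := by
  have h : ∀ j : Fin n, (v j - (∑ j', v j')/n) * (f j - (∑ j', f j')/n)
      = v j * f j - v j * ((∑ j', f j')/n) - ((∑ j', v j')/n) * f j
        + ((∑ j', v j')/n) * ((∑ j', f j')/n) := fun j => by ring
  simp only [h, Finset.sum_add_distrib, Finset.sum_sub_distrib, ← Finset.sum_mul,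
    ← Finset.mul_sum, Finset.sum_const, Finset.card_univ, Fintype.card_fin, nsmul_eq_mul]
  field_simp
  ring

lemma sum_indicator_centered {n k : ℕ} (hk1 : 1 ≤ k) (hkn : k ≤ n) (i : Fin n) :
    ∑ B ∈ powersetCard k (univ : Finset (Fin n)), ((if i ∈ B then (1:ℝ) else 0) - (k:ℝ)/n) = 0 := by
  have hn1 : 1 ≤ n := le_trans hk1 hkn
  have hcard : ((powersetCard k (univ : Finset (Fin n))).filter (fun B => i ∈ B)).card
      = (n-1).choose (k-1) := by
    have hb : ((powersetCard k (univ : Finset (Fin n))).filter (fun B => i ∈ B)).card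
        = (powersetCard (k-1) ((univ : Finset (Fin n)).erase i)).card := by
      apply Finset.card_nbij' (fun B => B.erase i) (fun B' => insert i B')
      · intro B hB
        simp only [Finset.mem_coe, Finset.mem_filter, Finset.mem_powersetCard] at hB
        simp only [Finset.mem_coe, Finset.mem_powersetCard]
        exact ⟨Finset.erase_subset_erase i (Finset.subset_univ B),
          by rw [Finset.card_erase_of_mem hB.2, hB.1.2]⟩
      · intro B' hB'
        simp only [Finset.mem_coe, Finset.mem_powersetCard] at hB'
        have hi : i ∉ B' := fun h => (Finset.mem_erase.1 (hB'.1 h)).1 rfl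
        simp only [Finset.mem_coe, Finset.mem_filter, Finset.mem_powersetCard]
        refine ⟨⟨Finset.subset_univ _, ?_⟩, Finset.mem_insert_self i B'⟩
        rw [Finset.card_insert_of_notMem hi, hB'.2]
        omega
      · intro B hB
        simp only [Finset.mem_coe, Finset.mem_filter] at hB
        exact Finset.insert_erase hB.2
      · intro B' hB'
        simp only [Finset.mem_coe, Finset.mem_powersetCard] at hB'
        exact Finset.erase_insert (fun h => (Finset.mem_erase.1 (hB'.1 h)).1 rfl)
    rw [hb, Finset.card_powersetCard, Finset.card_erase_of_mem (Finset.mem_univ i),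
      Finset.card_univ, Fintype.card_fin]
  rw [Finset.sum_sub_distrib, Finset.sum_boole, Finset.sum_const,
    Finset.card_powersetCard, Finset.card_univ, Fintype.card_fin, nsmul_eq_mul, hcard]
  have hnat : n * (n-1).choose (k-1) = n.choose k * k := by
    have h := Nat.add_one_mul_choose_eq (n-1) (k-1)
    simp only [Nat.succ_eq_add_one, Nat.sub_add_cancel hn1, Nat.sub_add_cancel hk1] at h
    exact h
  have hn0 : (n:ℝ) ≠ 0 := Nat.cast_ne_zero.2 (by omega)
  have hc := congrArg (Nat.cast : ℕ → ℝ) hnat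
  push_cast at hc
  field_simp
  linarith [hc]

lemma swap_sum (f : Fin I → ℝ) (g : Fin J → ℝ) (X : Fin I → Fin J → ℝ) :
    ∑ i, f i * ∑ j, g j * X i j = ∑ j, g j * ∑ i, f i * X i j := by
  simp only [Finset.mul_sum]
  rw [Finset.sum_comm]
  exact Finset.sum_congr rfl fun j _ => Finset.sum_congr rfl fun i _ => by ring

lemma decomp_aux (hI : (I:ℝ) ≠ 0) (hJ : (J:ℝ) ≠ 0)
    (A : Fin I → Fin J → ℝ) (u : Fin I → ℝ) (v : Fin J → ℝ) (r c : ℝ)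
    (hu : ∑ i, u i = r) (hv : ∑ j, v j = c) :
    (∑ i, ∑ j, u i * (v j * A i j)) =
      r * c * grandMean A
      + c * ∑ i, (u i - r / I) * (rowMean A i - grandMean A)
      + r * ∑ j, (v j - c / J) * (colMean A j - grandMean A)
      + ∑ i, ∑ j, (u i - r / I) * ((v j - c / J) * dcr A i j) := by
  have hg : (∑ i, rowMean A i)/(I:ℝ) = grandMean A := by
    simp only [rowMean, grandMean, ← Finset.sum_div]
    rw [div_div, mul_comm (J:ℝ) (I:ℝ)]
  have key1 : ∀ i, ∑ j, v j * A i j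
      = c * rowMean A i + ∑ j, (v j - c/J) * (A i j - rowMean A i) := by
    intro i
    have h := sum1D hJ v (A i)
    rw [hv] at h
    exact h
  have key2 : ∑ i, u i * rowMean A i
      = r * grandMean A + ∑ i, (u i - r/I) * (rowMean A i - grandMean A) := by
    have h := sum1D hI u (fun i => rowMean A i)
    rw [hu, hg] at h
    exact h
  have key3 : ∀ j, ∑ i, u i * (A i j - rowMean A i)
      = r * (colMean A j - grandMean A) + ∑ i, (u i - r/I) * dcr A i j := by
    intro j
    have h := sum1D hI u (fun i => A i j - rowMean A i)
    rw [hu] at h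
    have h2 : (∑ i, (A i j - rowMean A i))/(I:ℝ) = colMean A j - grandMean A := by
      rw [Finset.sum_sub_distrib, sub_div, hg]
      rfl
    rw [h2] at h
    rw [h]
    congr 1
    refine Finset.sum_congr rfl fun i _ => ?_
    simp only [dcr]
    ring
  calc ∑ i, ∑ j, u i * (v j * A i j)
      = ∑ i, u i * ∑ j, v j * A i j := by
        exact Finset.sum_congr rfl fun i _ => by rw [Finset.mul_sum]
    _ = ∑ i, (u i * (c * rowMean A i) + u i * ∑ j, (v j - c/J) * (A i j - rowMean A i)) := by
        refine Finset.sum_congr rfl fun i _ => ?_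
        rw [key1 i, mul_add]
    _ = c * (∑ i, u i * rowMean A i)
        + ∑ j, (v j - c/J) * ∑ i, u i * (A i j - rowMean A i) := by
        rw [Finset.sum_add_distrib, ← swap_sum]
        congr 1
        rw [Finset.mul_sum]
        exact Finset.sum_congr rfl fun i _ => by ring
    _ = c * (r * grandMean A + ∑ i, (u i - r/I) * (rowMean A i - grandMean A))
        + ∑ j, ((v j - c/J) * (r * (colMean A j - grandMean A))
            + (v j - c/J) * ∑ i, (u i - r/I) * dcr A i j) := by
        rw [key2]
        congr 1
        exact Finset.sum_congr rfl fun j _ => by rw [key3 j, mul_add]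
    _ = r * c * grandMean A
      + c * ∑ i, (u i - r / I) * (rowMean A i - grandMean A)
      + r * ∑ j, (v j - c / J) * (colMean A j - grandMean A)
      + ∑ i, ∑ j, (u i - r / I) * ((v j - c / J) * dcr A i j) := by
        rw [Finset.sum_add_distrib, ← swap_sum]
        rw [mul_add]
        have h5 : ∑ j, (v j - c/(J:ℝ)) * (r * (colMean A j - grandMean A))
            = r * ∑ j, (v j - c/(J:ℝ)) * (colMean A j - grandMean A) := by
          rw [Finset.mul_sum]; exact Finset.sum_congr rfl fun j _ => by ring
        rw [h5]
        have h4 : ∑ i, (u i - r/(I:ℝ)) * ∑ j, (v j - c/(J:ℝ)) * dcr A i j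
            = ∑ i, ∑ j, (u i - r/(I:ℝ)) * ((v j - c/(J:ℝ)) * dcr A i j) :=
          Finset.sum_congr rfl fun i _ => by rw [Finset.mul_sum]
        rw [h4]
        ring

lemma indicator_sum_eq {n : ℕ} (s : Finset (Fin n)) (g : Fin n → ℝ) :
    ∑ x, (if x ∈ s then (1:ℝ) else 0) * g x = ∑ x ∈ s, g x := by
  simp [ite_mul, Finset.sum_ite_mem]

lemma sum_indicator_card {n : ℕ} (s : Finset (Fin n)) :
    ∑ x, (if x ∈ s then (1:ℝ) else 0) = (s.card : ℝ) := by
  simp [Finset.sum_ite_mem]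

lemma sum_mem_eq (A : Fin I → Fin J → ℝ) (R : Finset (Fin I)) (C : Finset (Fin J)) :
    ∑ i ∈ R, ∑ j ∈ C, A i j
      = ∑ i, ∑ j, (if i ∈ R then (1:ℝ) else 0) * ((if j ∈ C then (1:ℝ) else 0) * A i j) := by
  calc ∑ i ∈ R, ∑ j ∈ C, A i j
      = ∑ i, (if i ∈ R then (1:ℝ) else 0) * ∑ j ∈ C, A i j := (indicator_sum_eq R _).symm
    _ = ∑ i, (if i ∈ R then (1:ℝ) else 0) * ∑ j, (if j ∈ C then (1:ℝ) else 0) * A i j := by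
        exact Finset.sum_congr rfl fun i _ => by rw [indicator_sum_eq C]
    _ = ∑ i, ∑ j, (if i ∈ R then (1:ℝ) else 0) * ((if j ∈ C then (1:ℝ) else 0) * A i j) :=
        Finset.sum_congr rfl fun i _ => Finset.mul_sum _ _ _

set_option maxHeartbeats 2000000 in
lemma mhat_eq (IT JT : ℕ) (hI : 2 ≤ I) (hJ : 2 ≤ J) (hIT1 : 1 ≤ IT) (hIT2 : IT ≤ I - 1)
    (hJT1 : 1 ≤ JT) (hJT2 : JT ≤ J - 1) (y : Gp → Fin I → Fin J → ℝ) (γ : Gp)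
    (ω : Omg I J) (hω1 : ω.1.card = IT) (hω2 : ω.2.card = JT) :
    mhat y γ ω = grandMean (y γ)
      + (if rowT γ then (1:ℝ) else -1) * ebarB I J IT y γ ω
      + (if colT γ then (1:ℝ) else -1) * ebarS I J JT y γ ω
      + ((if rowT γ then (1:ℝ) else -1) * (if colT γ then (1:ℝ) else -1))
          * ebarBS I J IT JT y γ ω := by
  have hITI : IT ≤ I := le_trans hIT2 (Nat.sub_le I 1)
  have hJTJ : JT ≤ J := le_trans hJT2 (Nat.sub_le J 1)
  have hI0 : (I:ℝ) ≠ 0 := Nat.cast_ne_zero.2 (by omega)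
  have hJ0 : (J:ℝ) ≠ 0 := Nat.cast_ne_zero.2 (by omega)
  have hIT0 : (IT:ℝ) ≠ 0 := Nat.cast_ne_zero.2 (by omega)
  have hJT0 : (JT:ℝ) ≠ 0 := Nat.cast_ne_zero.2 (by omega)
  have hITlt : (IT:ℝ) < I := by exact_mod_cast (show IT < I by omega)
  have hJTlt : (JT:ℝ) < J := by exact_mod_cast (show JT < J by omega)
  have hIC0 : (I:ℝ) - IT ≠ 0 := by linarith
  have hJC0 : (J:ℝ) - JT ≠ 0 := by linarith
  have hIsz : IszR I IT γ ≠ 0 := by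
    cases γ <;> simp only [IszR, rowT, if_true, if_false] <;> first | exact hIT0 | exact hIC0
  have hJsz : JszR J JT γ ≠ 0 := by
    cases γ <;> simp only [JszR, colT, if_true, if_false] <;> first | exact hJT0 | exact hJC0
  have hRcard : (((rowSet ω γ).card : ℕ) : ℝ) = IszR I IT γ := by
    cases hr : rowT γ <;>
      simp [rowSet, hr, IszR, Finset.card_compl, Fintype.card_fin, hω1, Nat.cast_sub hITI]
  have hCcard : (((colSet ω γ).card : ℕ) : ℝ) = JszR J JT γ := by
    cases hr : colT γ <;>
      simp [colSet, hr, JszR, Finset.card_compl, Fintype.card_fin, hω2, Nat.cast_sub hJTJ]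
  have hindR : ∀ i, (if i ∈ rowSet ω γ then (1:ℝ) else 0) - ((rowSet ω γ).card : ℝ)/I
      = (if rowT γ then (1:ℝ) else -1) * (WB ω i - (IT:ℝ)/I) := by
    intro i
    cases hr : rowT γ <;> by_cases hi : i ∈ ω.1 <;>
        simp [rowSet, hr, hi, WB, Finset.card_compl, Fintype.card_fin, hω1,
          Nat.cast_sub hITI] <;>
      field_simp <;>
      ring
  have hindC : ∀ j, (if j ∈ colSet ω γ then (1:ℝ) else 0) - ((colSet ω γ).card : ℝ)/J
      = (if colT γ then (1:ℝ) else -1) * (WS ω j - (JT:ℝ)/J) := by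
    intro j
    cases hr : colT γ <;> by_cases hj : j ∈ ω.2 <;>
        simp [colSet, hr, hj, WS, Finset.card_compl, Fintype.card_fin, hω2,
          Nat.cast_sub hJTJ] <;>
      field_simp <;>
      ring
  have hd := decomp_aux hI0 hJ0 (y γ)
      (fun i => if i ∈ rowSet ω γ then (1:ℝ) else 0)
      (fun j => if j ∈ colSet ω γ then (1:ℝ) else 0)
      ((rowSet ω γ).card : ℝ) ((colSet ω γ).card : ℝ)
      (sum_indicator_card _) (sum_indicator_card _)
  rw [mhat, sum_mem_eq (y γ) (rowSet ω γ) (colSet ω γ), hd]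
  have h1 : ∑ i, ((if i ∈ rowSet ω γ then (1:ℝ) else 0) - ((rowSet ω γ).card : ℝ)/I)
        * (rowMean (y γ) i - grandMean (y γ))
      = (if rowT γ then (1:ℝ) else -1)
        * ∑ i, (WB ω i - (IT:ℝ)/I) * (rowMean (y γ) i - grandMean (y γ)) := by
    rw [Finset.mul_sum]
    exact Finset.sum_congr rfl fun i _ => by rw [hindR i]; ring
  have h2 : ∑ j, ((if j ∈ colSet ω γ then (1:ℝ) else 0) - ((colSet ω γ).card : ℝ)/J)
        * (colMean (y γ) j - grandMean (y γ))
      = (if colT γ then (1:ℝ) else -1)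
        * ∑ j, (WS ω j - (JT:ℝ)/J) * (colMean (y γ) j - grandMean (y γ)) := by
    rw [Finset.mul_sum]
    exact Finset.sum_congr rfl fun j _ => by rw [hindC j]; ring
  have h3 : ∑ i, ∑ j, ((if i ∈ rowSet ω γ then (1:ℝ) else 0) - ((rowSet ω γ).card : ℝ)/I)
        * (((if j ∈ colSet ω γ then (1:ℝ) else 0) - ((colSet ω γ).card : ℝ)/J) * dcr (y γ) i j)
      = ((if rowT γ then (1:ℝ) else -1) * (if colT γ then (1:ℝ) else -1))
        * ∑ i, ∑ j, (WB ω i - (IT:ℝ)/I) * (WS ω j - (JT:ℝ)/J) * dcr (y γ) i j := by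
    rw [Finset.mul_sum]
    refine Finset.sum_congr rfl fun i _ => ?_
    rw [Finset.mul_sum]
    exact Finset.sum_congr rfl fun j _ => by rw [hindR i, hindC j]; ring
  rw [h1, h2, h3, hRcard, hCcard]
  have hbB : ebarB I J IT y γ ω
      = (∑ i, (WB ω i - (IT:ℝ)/I) * (rowMean (y γ) i - grandMean (y γ))) / IszR I IT γ := rfl
  have hbS : ebarS I J JT y γ ω
      = (∑ j, (WS ω j - (JT:ℝ)/J) * (colMean (y γ) j - grandMean (y γ))) / JszR J JT γ := rfl
  have hbBS : ebarBS I J IT JT y γ ω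
      = (∑ i, ∑ j, (WB ω i - (IT:ℝ)/I) * (WS ω j - (JT:ℝ)/J) * dcr (y γ) i j)
        / (IszR I IT γ * JszR J JT γ) := rfl
  rw [hbB, hbS, hbBS]
  generalize (if rowT γ = true then (1:ℝ) else -1) = sB
  generalize (if colT γ = true then (1:ℝ) else -1) = sS
  generalize (∑ i, (WB ω i - (IT:ℝ)/I) * (rowMean (y γ) i - grandMean (y γ))) = X
  generalize (∑ j, (WS ω j - (JT:ℝ)/J) * (colMean (y γ) j - grandMean (y γ))) = Y
  generalize (∑ i, ∑ j, (WB ω i - (IT:ℝ)/I) * (WS ω j - (JT:ℝ)/J) * dcr (y γ) i j) = Z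
  field_simp

/-- Hoeffding decomposition of the group means, zero means of the
residual terms, and orthogonality between residual terms of different kinds. -/
theorem stmt9 (I J IT JT : ℕ) (hI : 2 ≤ I) (hJ : 2 ≤ J)
    (hIT1 : 1 ≤ IT) (hIT2 : IT ≤ I - 1) (hJT1 : 1 ≤ JT) (hJT2 : JT ≤ J - 1)
    (y : Gp → Fin I → Fin J → ℝ) :
    (∀ ω ∈ designSets I J IT JT,
        mhat y .tr ω = grandMean (y .tr) + ebarB I J IT y .tr ω + ebarS I J JT y .tr ω +
            ebarBS I J IT JT y .tr ω ∧
        mhat y .ib ω = grandMean (y .ib) + ebarB I J IT y .ib ω - ebarS I J JT y .ib ω -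
            ebarBS I J IT JT y .ib ω ∧
        mhat y .is ω = grandMean (y .is) - ebarB I J IT y .is ω + ebarS I J JT y .is ω -
            ebarBS I J IT JT y .is ω ∧
        mhat y .cc ω = grandMean (y .cc) - ebarB I J IT y .cc ω - ebarS I J JT y .cc ω +
            ebarBS I J IT JT y .cc ω) ∧
    (∀ γ : Gp,
        (∫ ω, ebarB I J IT y γ ω ∂(smrd I J IT JT)) = 0 ∧
        (∫ ω, ebarS I J JT y γ ω ∂(smrd I J IT JT)) = 0 ∧
        (∫ ω, ebarBS I J IT JT y γ ω ∂(smrd I J IT JT)) = 0) ∧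
    (∀ γ γ' : Gp,
        cov (smrd I J IT JT) (ebarB I J IT y γ) (ebarS I J JT y γ') = 0 ∧
        cov (smrd I J IT JT) (ebarB I J IT y γ) (ebarBS I J IT JT y γ') = 0 ∧
        cov (smrd I J IT JT) (ebarS I J JT y γ) (ebarBS I J IT JT y γ') = 0) := by
  have hITI : IT ≤ I := le_trans hIT2 (Nat.sub_le I 1)
  have hJTJ : JT ≤ J := le_trans hJT2 (Nat.sub_le J 1)
  have hDS : designSets I J IT JT
      = powersetCard IT (univ : Finset (Fin I)) ×ˢ powersetCard JT (univ : Finset (Fin J)) := rfl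
  have hebB : ∀ (γ : Gp) (B : Finset (Fin I)) (S : Finset (Fin J)), ebarB I J IT y γ (B, S)
      = (∑ i, ((if i ∈ B then (1:ℝ) else 0) - (IT:ℝ)/I) * (rowMean (y γ) i - grandMean (y γ)))
        / IszR I IT γ := fun _ _ _ => rfl
  have hebS : ∀ (γ : Gp) (B : Finset (Fin I)) (S : Finset (Fin J)), ebarS I J JT y γ (B, S)
      = (∑ j, ((if j ∈ S then (1:ℝ) else 0) - (JT:ℝ)/J) * (colMean (y γ) j - grandMean (y γ)))
        / JszR J JT γ := fun _ _ _ => rfl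
  have hebBS : ∀ (γ : Gp) (B : Finset (Fin I)) (S : Finset (Fin J)), ebarBS I J IT JT y γ (B, S)
      = (∑ i, ∑ j, ((if i ∈ B then (1:ℝ) else 0) - (IT:ℝ)/I)
          * ((if j ∈ S then (1:ℝ) else 0) - (JT:ℝ)/J) * dcr (y γ) i j)
        / (IszR I IT γ * JszR J JT γ) := fun _ _ _ => rfl
  have hB0 : ∀ (h : Fin I → ℝ) (d : ℝ),
      ∑ B ∈ powersetCard IT (univ : Finset (Fin I)),
        (∑ i, ((if i ∈ B then (1:ℝ) else 0) - (IT:ℝ)/I) * h i) / d = 0 := by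
    intro h d
    rw [← Finset.sum_div]
    rw [Finset.sum_comm]
    have : ∀ i : Fin I, ∑ B ∈ powersetCard IT (univ : Finset (Fin I)),
        ((if i ∈ B then (1:ℝ) else 0) - (IT:ℝ)/I) * h i = 0 := by
      intro i
      rw [← Finset.sum_mul, sum_indicator_centered hIT1 hITI i, zero_mul]
    rw [Finset.sum_congr rfl fun i _ => this i, Finset.sum_const, smul_zero, zero_div]
  have hS0 : ∀ (h : Fin J → ℝ) (d : ℝ),
      ∑ S ∈ powersetCard JT (univ : Finset (Fin J)),
        (∑ j, ((if j ∈ S then (1:ℝ) else 0) - (JT:ℝ)/J) * h j) / d = 0 := by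
    intro h d
    rw [← Finset.sum_div]
    rw [Finset.sum_comm]
    have : ∀ j : Fin J, ∑ S ∈ powersetCard JT (univ : Finset (Fin J)),
        ((if j ∈ S then (1:ℝ) else 0) - (JT:ℝ)/J) * h j = 0 := by
      intro j
      rw [← Finset.sum_mul, sum_indicator_centered hJT1 hJTJ j, zero_mul]
    rw [Finset.sum_congr rfl fun j _ => this j, Finset.sum_const, smul_zero, zero_div]
  have sumBS_S : ∀ (γ : Gp) (B : Finset (Fin I)),
      ∑ S ∈ powersetCard JT (univ : Finset (Fin J)), ebarBS I J IT JT y γ (B, S) = 0 := by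
    intro γ B
    have hrw : ∀ S : Finset (Fin J),
        (∑ i, ∑ j, ((if i ∈ B then (1:ℝ) else 0) - (IT:ℝ)/I)
            * ((if j ∈ S then (1:ℝ) else 0) - (JT:ℝ)/J) * dcr (y γ) i j)
        = ∑ j, ((if j ∈ S then (1:ℝ) else 0) - (JT:ℝ)/J)
            * ∑ i, ((if i ∈ B then (1:ℝ) else 0) - (IT:ℝ)/I) * dcr (y γ) i j := by
      intro S
      rw [Finset.sum_comm]
      refine Finset.sum_congr rfl fun j _ => ?_
      rw [Finset.mul_sum]
      exact Finset.sum_congr rfl fun i _ => by ring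
    simp only [hebBS, hrw]
    exact hS0 _ _
  have sumBS_B : ∀ (γ : Gp) (S : Finset (Fin J)),
      ∑ B ∈ powersetCard IT (univ : Finset (Fin I)), ebarBS I J IT JT y γ (B, S) = 0 := by
    intro γ S
    have hrw : ∀ B : Finset (Fin I),
        (∑ i, ∑ j, ((if i ∈ B then (1:ℝ) else 0) - (IT:ℝ)/I)
            * ((if j ∈ S then (1:ℝ) else 0) - (JT:ℝ)/J) * dcr (y γ) i j)
        = ∑ i, ((if i ∈ B then (1:ℝ) else 0) - (IT:ℝ)/I)
            * ∑ j, ((if j ∈ S then (1:ℝ) else 0) - (JT:ℝ)/J) * dcr (y γ) i j := by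
      intro B
      refine Finset.sum_congr rfl fun i _ => ?_
      rw [Finset.mul_sum]
      exact Finset.sum_congr rfl fun j _ => by ring
    simp only [hebBS, hrw]
    exact hB0 _ _
  have sumB : ∀ γ : Gp, ∑ ω ∈ designSets I J IT JT, ebarB I J IT y γ ω = 0 := by
    intro γ
    rw [hDS, Finset.sum_product]
    simp only [hebB]
    rw [Finset.sum_comm]
    exact Finset.sum_eq_zero fun S _ => hB0 _ _
  have sumS : ∀ γ : Gp, ∑ ω ∈ designSets I J IT JT, ebarS I J JT y γ ω = 0 := by
    intro γ
    rw [hDS, Finset.sum_product]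
    simp only [hebS]
    exact Finset.sum_eq_zero fun B _ => hS0 _ _
  have sumBS : ∀ γ : Gp, ∑ ω ∈ designSets I J IT JT, ebarBS I J IT JT y γ ω = 0 := by
    intro γ
    rw [hDS, Finset.sum_product]
    exact Finset.sum_eq_zero fun B _ => sumBS_S γ B
  have intB : ∀ γ : Gp, (∫ ω, ebarB I J IT y γ ω ∂(smrd I J IT JT)) = 0 := by
    intro γ
    rw [smrd, integral_uniformOn_eq, sumB γ, mul_zero]
  have intS : ∀ γ : Gp, (∫ ω, ebarS I J JT y γ ω ∂(smrd I J IT JT)) = 0 := by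
    intro γ
    rw [smrd, integral_uniformOn_eq, sumS γ, mul_zero]
  have intBS : ∀ γ : Gp, (∫ ω, ebarBS I J IT JT y γ ω ∂(smrd I J IT JT)) = 0 := by
    intro γ
    rw [smrd, integral_uniformOn_eq, sumBS γ, mul_zero]
  have covrw : ∀ f g : Omg I J → ℝ,
      (∫ ω, f ω ∂(smrd I J IT JT)) = 0 → (∫ ω, g ω ∂(smrd I J IT JT)) = 0 →
      cov (smrd I J IT JT) f g = ∫ ω, f ω * g ω ∂(smrd I J IT JT) := by
    intro f g hf hg
    rw [cov, hf, hg]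
    simp only [sub_zero]
  refine ⟨?_, fun γ => ⟨intB γ, intS γ, intBS γ⟩, fun γ γ' => ⟨?_, ?_, ?_⟩⟩
  · intro ω hω
    have hω1 : ω.1.card = IT := by
      rw [hDS, Finset.mem_product] at hω
      exact (Finset.mem_powersetCard.1 hω.1).2
    have hω2 : ω.2.card = JT := by
      rw [hDS, Finset.mem_product] at hω
      exact (Finset.mem_powersetCard.1 hω.2).2
    refine ⟨?_, ?_, ?_, ?_⟩
    · have h := mhat_eq IT JT hI hJ hIT1 hIT2 hJT1 hJT2 y Gp.tr ω hω1 hω2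
      simp only [rowT, colT, if_true, one_mul, mul_one] at h
      exact h
    · have h := mhat_eq IT JT hI hJ hIT1 hIT2 hJT1 hJT2 y Gp.ib ω hω1 hω2
      simp [rowT, colT] at h
      linarith [h]
    · have h := mhat_eq IT JT hI hJ hIT1 hIT2 hJT1 hJT2 y Gp.is ω hω1 hω2
      simp [rowT, colT] at h
      linarith [h]
    · have h := mhat_eq IT JT hI hJ hIT1 hIT2 hJT1 hJT2 y Gp.cc ω hω1 hω2
      simp [rowT, colT] at h
      linarith [h]
  · rw [covrw _ _ (intB γ) (intS γ'), smrd, integral_uniformOn_eq]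
    have : ∑ ω ∈ designSets I J IT JT, ebarB I J IT y γ ω * ebarS I J JT y γ' ω = 0 := by
      rw [hDS, Finset.sum_product]
      simp only [hebB, hebS]
      rw [← Finset.sum_mul_sum]
      rw [hB0 _ _, zero_mul]
    rw [this, mul_zero]
  · rw [covrw _ _ (intB γ) (intBS γ'), smrd, integral_uniformOn_eq]
    have : ∑ ω ∈ designSets I J IT JT,
        ebarB I J IT y γ ω * ebarBS I J IT JT y γ' ω = 0 := by
      rw [hDS, Finset.sum_product]
      refine Finset.sum_eq_zero fun B _ => ?_
      simp only [hebB]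
      rw [← Finset.mul_sum, sumBS_S γ' B, mul_zero]
    rw [this, mul_zero]
  · rw [covrw _ _ (intS γ) (intBS γ'), smrd, integral_uniformOn_eq]
    have : ∑ ω ∈ designSets I J IT JT,
        ebarS I J JT y γ ω * ebarBS I J IT JT y γ' ω = 0 := by
      rw [hDS, Finset.sum_product]
      rw [Finset.sum_comm]
      refine Finset.sum_eq_zero fun S _ => ?_
      simp only [hebS]
      rw [← Finset.mul_sum, sumBS_B γ' S, mul_zero]
    rw [this, mul_zero]


end SMRD

end
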